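/- Let K be an algebraically closed field and let f, g be nonzero polynomials in two variables over K (elements of MvPolynomial (Fin 2) K) such that every common divisor of f and g is a unit. Then the common zero set Z = {p : Fin 2 → K | f(p) = 0 and g(p) = 0} is finite and Z.ncard ≤ totalDegree(f) · totalDegree(g). -/

import Mathlib

open MvPolynomial Module

section DegreeMul
variable {σ : Type*} {R : Type*} [CommRing R] [IsDomain R]


lemma homComp_td_ne_zero {p : MvPolynomial σ R} (hp : p ≠ 0) :
    homogeneousComponent p.totalDegree p ≠ 0 := by
  obtain ⟨d, hd, hdeg⟩ := Finset.exists_mem_eq_sup p.support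
    (support_nonempty.mpr hp) (fun s => s.sum fun _ e => e)
  intro h
  have : coeff d (homogeneousComponent p.totalDegree p) = coeff d p := by
    rw [coeff_homogeneousComponent, if_pos]
    rw [Finsupp.degree, totalDegree, hdeg]; rfl
  rw [h] at this
  exact (MvPolynomial.mem_support_iff.mp hd) this.symm

example (p : MvPolynomial σ R) : True := trivial

lemma td_remainder (p : MvPolynomial σ R) :
    (p - homogeneousComponent p.totalDegree p) = 0 ∨
    (p - homogeneousComponent p.totalDegree p).totalDegree < p.totalDegree := by
  by_cases h : p - homogeneousComponent p.totalDegree p = 0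
  · exact Or.inl h
  · right
    rw [totalDegree, Finset.sup_lt_iff]
    · intro d hd
      rw [MvPolynomial.mem_support_iff, coeff_sub, coeff_homogeneousComponent] at hd
      by_cases hdd : Finsupp.degree d = p.totalDegree
      · simp [hdd] at hd
      · have hmem : d ∈ p.support := by
          rw [MvPolynomial.mem_support_iff]; intro h0; simp [h0, if_neg hdd] at hd
        have := le_totalDegree hmem
        have hdeg : Finsupp.degree d = d.sum fun _ e => e := by
          rw [Finsupp.degree]; rfl
        omega
    · rcases Nat.eq_zero_or_pos p.totalDegree with h0 | h0
      · exfalso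
        apply h
        rw [h0, homogeneousComponent_zero, sub_eq_zero]
        classical
        rw [totalDegree_eq_zero_iff] at h0
        ext d
        rcases eq_or_ne d 0 with rfl | hd
        · simp
        · rw [coeff_C, if_neg (Ne.symm hd)]
          by_contra hc
          obtain ⟨x, hx⟩ := Finsupp.ne_iff.mp hd
          exact hx (by simpa using h0 d (MvPolynomial.mem_support_iff.mpr hc) x)
      · exact h0

theorem totalDegree_mul_eq_of_domain {p q : MvPolynomial σ R} (hp : p ≠ 0) (hq : q ≠ 0) :
    (p * q).totalDegree = p.totalDegree + q.totalDegree := by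
  set a := p.totalDegree with ha
  set b := q.totalDegree with hb
  set pa := homogeneousComponent a p with hpa
  set qb := homogeneousComponent b q with hqb
  have hpane : pa ≠ 0 := homComp_td_ne_zero hp
  have hqbne : qb ≠ 0 := homComp_td_ne_zero hq
  have hpah : pa.IsHomogeneous a := homogeneousComponent_isHomogeneous a p
  have hqbh : qb.IsHomogeneous b := homogeneousComponent_isHomogeneous b q
  have key : homogeneousComponent (a + b) (p * q) = pa * qb := by
    have hdecomp : p * q = pa * qb + ((p - pa) * q + pa * (q - qb)) := by ring
    rw [hdecomp, map_add, map_add]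
    have h1 : homogeneousComponent (a + b) (pa * qb) = pa * qb := by
      rw [homogeneousComponent_of_mem ((hpah.mul hqbh) : _ ∈ homogeneousSubmodule σ R (a + b)),
        if_pos rfl]
    have h2 : homogeneousComponent (a + b) ((p - pa) * q) = 0 := by
      rcases td_remainder p with h0 | h0
      · rw [← hpa] at h0; rw [h0, zero_mul, map_zero]
      · apply homogeneousComponent_eq_zero
        calc ((p - pa) * q).totalDegree ≤ (p - pa).totalDegree + b :=
              le_trans (totalDegree_mul _ _) (by rw [hb])
          _ < a + b := by rw [← hpa] at h0; omega
    have h3 : homogeneousComponent (a + b) (pa * (q - qb)) = 0 := by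
      rcases td_remainder q with h0 | h0
      · rw [← hqb] at h0; rw [h0, mul_zero, map_zero]
      · apply homogeneousComponent_eq_zero
        calc (pa * (q - qb)).totalDegree ≤ a + (q - qb).totalDegree := by
              refine le_trans (totalDegree_mul _ _) (Nat.add_le_add_right ?_ _)
              exact hpah.totalDegree_le
          _ < a + b := by rw [← hqb] at h0; omega
    rw [h1, h2, h3, add_zero, add_zero]
  have hne : pa * qb ≠ 0 := mul_ne_zero hpane hqbne
  refine le_antisymm (totalDegree_mul p q) ?_
  by_contra hlt
  push_neg at hlt
  rw [← key] at hne
  exact hne (homogeneousComponent_eq_zero _ _ hlt)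

end DegreeMul

section Count


lemma trisum (d : ℕ) : (∑ k ∈ Finset.range (d+1), (k+1)) * 2 = (d+1)*(d+2) := by
  induction d with
  | zero => simp
  | succ n ih => rw [Finset.sum_range_succ, add_mul]; nlinarith

lemma card_tri (d : ℕ) :
    Nat.card {x : ℕ × ℕ // x.1 + x.2 ≤ d} * 2 = (d+1)*(d+2) := by
  classical
  have hset : {x : ℕ × ℕ | x.1 + x.2 ≤ d} =
      ↑((Finset.range (d+1)).biUnion Finset.HasAntidiagonal.antidiagonal) := by
    ext ⟨i, j⟩
    simp only [Set.mem_setOf_eq, Finset.coe_biUnion, Set.mem_iUnion, Finset.mem_coe,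
      Finset.mem_biUnion, Finset.mem_range, Finset.HasAntidiagonal.mem_antidiagonal]
    constructor
    · intro h; exact ⟨i + j, by omega, by simp [Finset.HasAntidiagonal.mem_antidiagonal]⟩
    · rintro ⟨k, hk, hm⟩; omega
  have : Nat.card {x : ℕ × ℕ // x.1 + x.2 ≤ d} =
      ((Finset.range (d+1)).biUnion Finset.HasAntidiagonal.antidiagonal).card := by
    exact (Nat.card_coe_set_eq {x : ℕ × ℕ | x.1 + x.2 ≤ d}).trans
      (by rw [hset, Set.ncard_coe_finset])
  rw [this, Finset.card_biUnion, ← trisum d]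
  · congr 1
    exact Finset.sum_congr rfl fun k _ => Finset.Nat.card_antidiagonal k
  · intro x _ y _ hxy
    simp only [Finset.disjoint_left, Finset.HasAntidiagonal.mem_antidiagonal]
    rintro ⟨i, j⟩ h1 h2
    exact hxy (h1 ▸ h2 ▸ rfl)

variable (K : Type*) [Field K]

lemma finrank_V (d : ℕ) :
    Module.finrank K (restrictTotalDegree (Fin 2) K d) * 2 = (d+1)*(d+2) := by
  rw [show restrictTotalDegree (Fin 2) K d =
      restrictSupport K { n : Fin 2 →₀ ℕ | (n.sum fun _ e => e) ≤ d } from rfl]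
  rw [Module.finrank_eq_nat_card_basis
    (basisRestrictSupport K { n : Fin 2 →₀ ℕ | (n.sum fun _ e => e) ≤ d })]
  rw [← card_tri d]
  congr 1
  apply Nat.card_congr
  refine Equiv.subtypeEquiv ((Finsupp.equivFunOnFinite).trans (finTwoArrowEquiv ℕ)) ?_
  intro n
  have : (n.sum fun _ e => e) = n 0 + n 1 := by
    rw [Finsupp.sum_fintype _ _ (fun _ => rfl), Fin.sum_univ_two]
  simp [this, finTwoArrowEquiv, Finsupp.equivFunOnFinite]

end Count

section Main
variable {K : Type*} [Field K]

lemma exists_indicator' (S : Finset (Fin 2 → K)) (p : Fin 2 → K) (hp : p ∈ S) :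
    ∃ h : MvPolynomial (Fin 2) K, h.totalDegree ≤ S.card - 1 ∧
      MvPolynomial.eval p h ≠ 0 ∧ ∀ q ∈ S, q ≠ p → MvPolynomial.eval q h = 0 := by
  classical
  set c : (Fin 2 → K) → Fin 2 := fun q => if p 0 ≠ q 0 then 0 else 1 with hc
  have hcne : ∀ q, q ≠ p → p (c q) ≠ q (c q) := by
    intro q hq
    by_cases h0 : p 0 ≠ q 0
    · simpa [hc, h0] using h0
    · push_neg at h0
      have h1 : p 1 ≠ q 1 := by
        intro h1
        apply hq
        funext i
        fin_cases i
        · exact h0.symm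
        · exact h1.symm
      simpa [hc, h0] using h1
  set ℓ : (Fin 2 → K) → MvPolynomial (Fin 2) K :=
    fun q => X (c q) + C (-(q (c q))) with hℓ
  have hℓeval : ∀ q r : Fin 2 → K, MvPolynomial.eval r (ℓ q) = r (c q) - q (c q) := by
    intro q r; simp [hℓ, sub_eq_add_neg]
  have hℓdeg : ∀ q, (ℓ q).totalDegree ≤ 1 := by
    intro q
    refine le_trans (totalDegree_add _ _) ?_
    simp [totalDegree_X, totalDegree_C]
  refine ⟨∏ q ∈ S.erase p, ℓ q, ?_, ?_, ?_⟩
  · refine le_trans (totalDegree_finset_prod _ _) ?_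
    calc (∑ q ∈ S.erase p, (ℓ q).totalDegree) ≤ ∑ _q ∈ S.erase p, 1 :=
          Finset.sum_le_sum fun q _ => hℓdeg q
      _ = (S.erase p).card := by simp
      _ ≤ S.card - 1 := by rw [Finset.card_erase_of_mem hp]
  · rw [map_prod]
    rw [Finset.prod_ne_zero_iff]
    intro q hq
    rw [hℓeval]
    exact sub_ne_zero_of_ne (hcne q (Finset.ne_of_mem_erase hq))
  · intro q hq hqp
    rw [map_prod]
    exact Finset.prod_eq_zero (Finset.mem_erase.mpr ⟨hqp, hq⟩) (by rw [hℓeval]; ring)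




noncomputable def mulMap (h : MvPolynomial (Fin 2) K) (a b : ℕ) (hab : h.totalDegree + a ≤ b) :
    restrictTotalDegree (Fin 2) K a →ₗ[K] restrictTotalDegree (Fin 2) K b :=
  LinearMap.codRestrict _ ((LinearMap.mulLeft K h).comp (Submodule.subtype _)) (fun u => by
    rw [mem_restrictTotalDegree]
    have h1 : (h * (u : MvPolynomial (Fin 2) K)).totalDegree ≤
        h.totalDegree + (u : MvPolynomial (Fin 2) K).totalDegree := totalDegree_mul _ _
    have h2 := (mem_restrictTotalDegree _ _ _).mp u.2
    exact le_trans h1 (by omega))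

@[simp] lemma mulMap_apply (h : MvPolynomial (Fin 2) K) (a b : ℕ) (hab) (u) :
    ((mulMap h a b hab u : restrictTotalDegree (Fin 2) K b) : MvPolynomial (Fin 2) K)
      = h * (u : MvPolynomial (Fin 2) K) := rfl

noncomputable def evMap (d : ℕ) (S : Finset (Fin 2 → K)) :
    restrictTotalDegree (Fin 2) K d →ₗ[K] (↥S → K) :=
  LinearMap.pi fun p => (MvPolynomial.aeval (p : Fin 2 → K)).toLinearMap.comp
    (Submodule.subtype _)

@[simp] lemma evMap_apply (d : ℕ) (S : Finset (Fin 2 → K)) (u) (p : ↥S) :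
    evMap d S u p = MvPolynomial.eval (p : Fin 2 → K) (u : MvPolynomial (Fin 2) K) := by
  show MvPolynomial.aeval (p : Fin 2 → K) (u : MvPolynomial (Fin 2) K) = _
  rw [← MvPolynomial.coe_aeval_eq_eval]
  rfl


lemma card_le_main (f g : MvPolynomial (Fin 2) K) (hf : f ≠ 0) (hg : g ≠ 0)
    (hcop : IsRelPrime f g) (hm : 1 ≤ f.totalDegree) (hm' : 1 ≤ g.totalDegree)
    (S : Finset (Fin 2 → K))
    (hS : ∀ p ∈ S, MvPolynomial.eval p f = 0 ∧ MvPolynomial.eval p g = 0) :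
    S.card ≤ f.totalDegree * g.totalDegree := by
  classical
  set m := f.totalDegree with hmdef
  set m' := g.totalDegree with hm'def
  set d := max (m + m') S.card with hd
  have hdge : m + m' ≤ d := le_max_left _ _
  have hdge2 : S.card ≤ d := le_max_right _ _
  have h1 : m + (d - m) ≤ d := by omega
  have h2 : m' + (d - m') ≤ d := by omega
  have h3 : m' + (d - m - m') ≤ d - m := by omega
  have h4 : m + (d - m - m') ≤ d - m' := by omega
  set φ : (restrictTotalDegree (Fin 2) K (d-m) × restrictTotalDegree (Fin 2) K (d-m')) →ₗ[K]
      restrictTotalDegree (Fin 2) K d :=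
    (mulMap f (d-m) d h1).coprod (mulMap g (d-m') d h2) with hφ
  set ψ : restrictTotalDegree (Fin 2) K (d-m-m') →ₗ[K]
      (restrictTotalDegree (Fin 2) K (d-m) × restrictTotalDegree (Fin 2) K (d-m')) :=
    (mulMap g (d-m-m') (d-m) h3).prod (-(mulMap f (d-m-m') (d-m') h4)) with hψ
  set ev := evMap d S with hev
  have hφcoe : ∀ x, ((φ x : restrictTotalDegree (Fin 2) K d) : MvPolynomial (Fin 2) K)
      = f * (x.1 : MvPolynomial (Fin 2) K) + g * (x.2 : MvPolynomial (Fin 2) K) := fun x => rfl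
  have hψcoe1 : ∀ w, (((ψ w).1 : restrictTotalDegree (Fin 2) K (d-m)) : MvPolynomial (Fin 2) K)
      = g * (w : MvPolynomial (Fin 2) K) := fun w => rfl
  have hψcoe2 : ∀ w, (((ψ w).2 : restrictTotalDegree (Fin 2) K (d-m')) : MvPolynomial (Fin 2) K)
      = -(f * (w : MvPolynomial (Fin 2) K)) := fun w => rfl
  -- Fact A : range φ ≤ ker ev
  have hAB : LinearMap.range φ ≤ LinearMap.ker ev := by
    rintro x ⟨y, rfl⟩
    rw [LinearMap.mem_ker]
    funext p
    rw [hev]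
    rw [evMap_apply, hφcoe]
    rw [map_add, map_mul, map_mul, (hS p p.2).1, (hS p p.2).2, zero_mul, zero_mul, add_zero]
    rfl
  -- Fact B : ev surjective
  have hev_surj : LinearMap.range ev = ⊤ := by
    rw [← top_le_iff, ← (Pi.basisFun K ↥S).span_eq, Submodule.span_le]
    rintro _ ⟨p, rfl⟩
    obtain ⟨h, hdeg, hne, hzero⟩ := exists_indicator' S p p.2
    have hmem : h ∈ restrictTotalDegree (Fin 2) K d := by
      rw [mem_restrictTotalDegree]; omega
    refine ⟨(MvPolynomial.eval (p : Fin 2 → K) h)⁻¹ • ⟨h, hmem⟩, ?_⟩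
    funext q
    rw [Pi.basisFun_apply]
    rw [hev, map_smul]
    have : evMap d S ⟨h, hmem⟩ q = MvPolynomial.eval (q : Fin 2 → K) h := evMap_apply _ _ _ _
    rw [Pi.smul_apply, this, smul_eq_mul]
    rcases eq_or_ne q p with rfl | hqp
    · rw [inv_mul_cancel₀ hne, Pi.single_eq_same]
    · rw [hzero q q.2 (fun hc => hqp (Subtype.ext hc)), mul_zero,
        Pi.single_eq_of_ne hqp]
  -- Fact C : ker φ = range ψ
  have hker : LinearMap.ker φ = LinearMap.range ψ := by
    apply le_antisymm
    · rintro ⟨u, v⟩ huv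
      rw [LinearMap.mem_ker] at huv
      have huv' : f * (u : MvPolynomial (Fin 2) K) + g * (v : MvPolynomial (Fin 2) K) = 0 := by
        have := congrArg (Subtype.val) huv
        rw [hφcoe] at this
        simpa using this
      by_cases hu : (u : MvPolynomial (Fin 2) K) = 0
      · have hv : (v : MvPolynomial (Fin 2) K) = 0 := by
          rw [hu, mul_zero, zero_add] at huv'
          exact (mul_eq_zero.mp huv').resolve_left hg
        refine ⟨0, ?_⟩
        rw [map_zero]
        refine Prod.ext (Subtype.ext ?_) (Subtype.ext ?_) <;> simp [hu, hv]
      · have hdvd : g ∣ (u : MvPolynomial (Fin 2) K) := by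
          refine hcop.symm.dvd_of_dvd_mul_right (y := (u : MvPolynomial (Fin 2) K)) ?_
          exact ⟨-(v : MvPolynomial (Fin 2) K), by linear_combination huv'⟩
        obtain ⟨w, hw⟩ := hdvd
        have hwne : w ≠ 0 := fun hc => hu (by rw [hw, hc, mul_zero])
        have hdegu : (u : MvPolynomial (Fin 2) K).totalDegree ≤ d - m :=
          (mem_restrictTotalDegree _ _ _).mp u.2
        have hdegw : w.totalDegree ≤ d - m - m' := by
          have hh := totalDegree_mul_eq_of_domain hg hwne
          rw [← hw] at hh
          omega
        have hveq : (v : MvPolynomial (Fin 2) K) = -(f * w) := by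
          have hzero : g * (f * w + (v : MvPolynomial (Fin 2) K)) = 0 := by
            rw [hw] at huv'; linear_combination huv'
          have := (mul_eq_zero.mp hzero).resolve_left hg
          linear_combination this
        refine ⟨⟨w, (mem_restrictTotalDegree _ _ _).mpr hdegw⟩, ?_⟩
        refine Prod.ext (Subtype.ext ?_) (Subtype.ext ?_)
        · rw [hψcoe1]; exact hw.symm
        · rw [hψcoe2]; exact hveq.symm
    · rintro _ ⟨w, rfl⟩
      rw [LinearMap.mem_ker]
      apply Subtype.ext
      rw [hφcoe, hψcoe1, hψcoe2]
      ring_nf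
      rfl
  -- Fact D : ψ injective
  have hψinj : Function.Injective ψ := by
    intro w w' hww'
    have : (((ψ w).1 : restrictTotalDegree (Fin 2) K (d-m)) : MvPolynomial (Fin 2) K)
        = (((ψ w').1 : restrictTotalDegree (Fin 2) K (d-m)) : MvPolynomial (Fin 2) K) := by
      rw [hww']
    rw [hψcoe1, hψcoe1] at this
    exact Subtype.ext (mul_left_cancel₀ hg this)
  -- Counting
  have rn1 := LinearMap.finrank_range_add_finrank_ker φ
  have rn2 := LinearMap.finrank_range_add_finrank_ker ev
  have hprod : finrank K (restrictTotalDegree (Fin 2) K (d-m) ×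
        restrictTotalDegree (Fin 2) K (d-m'))
      = finrank K (restrictTotalDegree (Fin 2) K (d-m)) +
        finrank K (restrictTotalDegree (Fin 2) K (d-m')) := Module.finrank_prod
  have hkerφ : finrank K (LinearMap.ker φ) = finrank K (restrictTotalDegree (Fin 2) K (d-m-m')) := by
    rw [hker]
    exact (LinearMap.finrank_range_of_inj hψinj)
  have hrangeev : finrank K (LinearMap.range ev) = S.card := by
    rw [hev_surj, finrank_top, Module.finrank_pi, Fintype.card_coe]
  have hle : finrank K (LinearMap.range φ) ≤ finrank K (LinearMap.ker ev) :=
    Submodule.finrank_mono hAB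
  have e1 := finrank_V (K := K) d
  have e2 := finrank_V (K := K) (d - m)
  have e3 := finrank_V (K := K) (d - m')
  have e4 := finrank_V (K := K) (d - m - m')
  obtain ⟨a, ha0, ha1, ha2, ha3⟩ : ∃ a, d - m - m' = a ∧ d - m = a + m' ∧ d - m' = a + m ∧
      d = a + m + m' := ⟨d - m - m', rfl, by omega, by omega, by omega⟩
  have hsum : finrank K (restrictTotalDegree (Fin 2) K d) * 2 +
      finrank K (restrictTotalDegree (Fin 2) K (d-m-m')) * 2
      = finrank K (restrictTotalDegree (Fin 2) K (d-m)) * 2 +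
        finrank K (restrictTotalDegree (Fin 2) K (d-m')) * 2 + m * m' * 2 := by
    rw [e1, e2, e3, e4, ha0, ha1, ha2, ha3]
    ring
  rw [hprod] at rn1
  rw [hkerφ] at rn1
  rw [hrangeev] at rn2
  omega

end Main

lemma eq_C_of_td_eq_zero {K : Type*} [Field K] {p : MvPolynomial (Fin 2) K}
    (h0 : p.totalDegree = 0) : p = C (coeff 0 p) := by
  classical
  rw [totalDegree_eq_zero_iff] at h0
  ext d
  rcases eq_or_ne d 0 with rfl | hd
  · simp
  · rw [coeff_C, if_neg (Ne.symm hd)]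
    by_contra hc
    obtain ⟨x, hx⟩ := Finsupp.ne_iff.mp hd
    exact hx (by simpa using h0 d (MvPolynomial.mem_support_iff.mpr hc) x)

/-- Bézout's theorem (1764) on plane curves: two nonzero polynomials in two variables
over an algebraically closed field, having no nonunit common divisor, have a finite
common zero set of cardinality at most the product of their total degrees. -/
theorem bezout_plane_curves {K : Type*} [Field K] [IsAlgClosed K]
    (f g : MvPolynomial (Fin 2) K) (hf : f ≠ 0) (hg : g ≠ 0)
    (hcop : ∀ d : MvPolynomial (Fin 2) K, d ∣ f → d ∣ g → IsUnit d) :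
    {p : Fin 2 → K | MvPolynomial.eval p f = 0 ∧ MvPolynomial.eval p g = 0}.Finite ∧
    {p : Fin 2 → K | MvPolynomial.eval p f = 0 ∧ MvPolynomial.eval p g = 0}.ncard ≤
      f.totalDegree * g.totalDegree := by
  classical
  set Z := {p : Fin 2 → K | MvPolynomial.eval p f = 0 ∧ MvPolynomial.eval p g = 0} with hZ
  rcases Nat.eq_zero_or_pos f.totalDegree with h0 | hm
  · have hZe : Z = ∅ := by
      ext p
      simp only [hZ, Set.mem_setOf_eq, Set.mem_empty_iff_false, iff_false, not_and]
      intro hfp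
      exfalso
      have hfc := eq_C_of_td_eq_zero h0
      rw [hfc, eval_C] at hfp
      exact hf (by rw [hfc, hfp, map_zero])
    rw [hZe]
    exact ⟨Set.finite_empty, by simp⟩
  rcases Nat.eq_zero_or_pos g.totalDegree with h0' | hm'
  · have hZe : Z = ∅ := by
      ext p
      simp only [hZ, Set.mem_setOf_eq, Set.mem_empty_iff_false, iff_false, not_and]
      intro _ hgp
      have hgc := eq_C_of_td_eq_zero h0'
      rw [hgc, eval_C] at hgp
      exact absurd (by rw [hgc, hgp, map_zero]) hg
    rw [hZe]
    exact ⟨Set.finite_empty, by simp⟩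
  · have hrel : IsRelPrime f g := fun {z} zf zg => hcop z zf zg
    have key : ∀ S : Finset (Fin 2 → K), ↑S ⊆ Z → S.card ≤ f.totalDegree * g.totalDegree := by
      intro S hSsub
      exact card_le_main f g hf hg hrel hm hm' S fun p hp => hSsub hp
    have hfin : Z.Finite := by
      by_contra hinf
      obtain ⟨S, hsub, hcard⟩ :=
        Set.Infinite.exists_subset_card_eq hinf (f.totalDegree * g.totalDegree + 1)
      have := key S hsub
      omega
    refine ⟨hfin, ?_⟩
    rw [Set.ncard_eq_toFinset_card Z hfin]
    exact key hfin.toFinset (by simp)
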